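/- Let f be an n-ary polymorphism of (LO₂, LO₃) and let T be a 2-set of f that can be written as the disjoint union of two boolean sets. Then every decomposition of T as a disjoint union T = A ∪ B of two boolean sets A, B of f satisfies exactly one of: (type 01) {f(A), f(B)} = {0,1}, or (type 00) f(A) = f(B) = 0; moreover, the type is the same for all such decompositions of T (i.e. T cannot admit one decomposition of type 01 and another of type 00). -/

import Mathlib

open Finset

/-- A triple of naturals has a unique maximum entry. -/
def HasUniqueMax (a b c : ℕ) : Prop :=
  (b < a ∧ c < a) ∨ (a < b ∧ c < b) ∨ (a < c ∧ b < c)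

/-- `f` is an `n`-ary polymorphism of (LO₂, LO₃): it maps subsets of `[n]` to `{0,1,2}`
and sends every partition of `[n]` into three (possibly empty) parts to a triple with a
unique maximum. -/
def IsLOPoly (n : ℕ) (f : Finset (Fin n) → ℕ) : Prop :=
  (∀ X, f X ≤ 2) ∧
  ∀ X Y Z : Finset (Fin n), Disjoint X Y → Disjoint X Z → Disjoint Y Z →
    X ∪ Y ∪ Z = Finset.univ → HasUniqueMax (f X) (f Y) (f Z)

/-- The function obtained from `f` by changing the value of `X` to `i`. -/
def LORecolour {n : ℕ} (f : Finset (Fin n) → ℕ) (X : Finset (Fin n)) (i : ℕ) :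
    Finset (Fin n) → ℕ :=
  fun Y => if Y = X then i else f Y

/-- `X` is recolourable to `i` for `f`. -/
def LORecolourableTo {n : ℕ} (f : Finset (Fin n) → ℕ) (X : Finset (Fin n)) (i : ℕ) : Prop :=
  i ≠ f X ∧ IsLOPoly n (LORecolour f X i)

/-- A boolean set is static if it is not recolourable to the opposite boolean value. -/
def LOStatic {n : ℕ} (f : Finset (Fin n) → ℕ) (X : Finset (Fin n)) : Prop :=
  (f X = 0 ∧ ¬ LORecolourableTo f X 1) ∨ (f X = 1 ∧ ¬ LORecolourableTo f X 0)

/-- `(X, Y, Z)` is a boolean partition of `[n]` for `f`. -/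
def LOBoolPartition {n : ℕ} (f : Finset (Fin n) → ℕ) (X Y Z : Finset (Fin n)) : Prop :=
  Disjoint X Y ∧ Disjoint X Z ∧ Disjoint Y Z ∧ X ∪ Y ∪ Z = Finset.univ ∧
    ({f X, f Y, f Z} : Set ℕ) = {0, 1}

/-- Every superset of a 2-set is a 2-set. -/
def LOUpwardsClosed {n : ℕ} (f : Finset (Fin n) → ℕ) : Prop :=
  ∀ X Y : Finset (Fin n), f X = 2 → X ⊆ Y → f Y = 2

/-- `f` is saturated: upwards closed and the complement of every boolean set is a 2-set. -/
def LOSaturated {n : ℕ} (f : Finset (Fin n) → ℕ) : Prop :=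
  LOUpwardsClosed f ∧ ∀ X : Finset (Fin n), f X ≤ 1 → f Xᶜ = 2

/-- One step of saturation: `g` is a polymorphism obtained from `f` by recolouring a
single boolean set of `f` to 2. -/
def LORecolourStep {n : ℕ} (f g : Finset (Fin n) → ℕ) : Prop :=
  IsLOPoly n g ∧ ∃ X, f X ≤ 1 ∧ g = LORecolour f X 2

/-- `g` is a saturation of `f`. -/
def IsLOSaturation {n : ℕ} (f g : Finset (Fin n) → ℕ) : Prop :=
  IsLOPoly n g ∧ LOSaturated g ∧ Relation.ReflTransGen LORecolourStep f g

/-- `f` has no small 2-set (a 2-set with at most 3 elements). -/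
def LONoSmallTwoSet {n : ℕ} (f : Finset (Fin n) → ℕ) : Prop :=
  ∀ X, f X = 2 → 4 ≤ X.card

/-- `g` is a pure saturation of `f`: a saturation with no small 2-set. -/
def IsLOPureSaturation {n : ℕ} (f g : Finset (Fin n) → ℕ) : Prop :=
  IsLOSaturation f g ∧ LONoSmallTwoSet g

/-- `M` is a minimal (under inclusion) 2-set of `f`. -/
def LOMinTwoSet {n : ℕ} (f : Finset (Fin n) → ℕ) (M : Finset (Fin n)) : Prop :=
  f M = 2 ∧ ∀ Y, Y ⊂ M → f Y ≠ 2

/-- `T_f`: the union of the minimal 2-sets of `f`. -/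
def LOTSet {n : ℕ} (f : Finset (Fin n) → ℕ) : Set (Fin n) :=
  {a | ∃ M, LOMinTwoSet f M ∧ a ∈ M}

/-- `f` is a recoloured projection with dictating variable `t`: every static boolean set
`S` satisfies `f S = 1` iff `t ∈ S` (and `f S = 0` otherwise). -/
def LORecolProj {n : ℕ} (f : Finset (Fin n) → ℕ) (t : Fin n) : Prop :=
  ∀ S, f S ≤ 1 → LOStatic f S → f S = if t ∈ S then 1 else 0

/-- The `π`-minor of `f`: `f^π (X) = f(π⁻¹(X))`. -/
def LOMinor {n m : ℕ} (f : Finset (Fin n) → ℕ) (π : Fin n → Fin m) :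
    Finset (Fin m) → ℕ :=
  fun X => f (Finset.univ.filter (fun a => π a ∈ X))

/-- A 2-set that is a disjoint union of two boolean sets has a well-defined type:
every such decomposition is of type 01 (`{f A, f B} = {0,1}`) or of type 00
(`f A = f B = 0`), exactly one of the two holds, and the type does not depend on the
decomposition. -/
lemma pair_eq_01 (a b : ℕ) (ha : a ≤ 1) (hb : b ≤ 1) :
    ({a, b} : Set ℕ) = {0, 1} ↔ (a = 0 ∧ b = 1) ∨ (a = 1 ∧ b = 0) := by
  constructor
  · intro h
    have h1 : (1 : ℕ) ∈ ({a, b} : Set ℕ) := by rw [h]; right; rfl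
    have h0 : (0 : ℕ) ∈ ({a, b} : Set ℕ) := by rw [h]; left; rfl
    simp only [Set.mem_insert_iff, Set.mem_singleton_iff] at h1 h0
    omega
  · rintro (⟨rfl, rfl⟩ | ⟨rfl, rfl⟩)
    · rfl
    · ext x; simp only [Set.mem_insert_iff, Set.mem_singleton_iff]; omega

theorem stmt16 (n : ℕ) (hn : 1 ≤ n) (f : Finset (Fin n) → ℕ) (hf : IsLOPoly n f)
    (T : Finset (Fin n)) (hT : f T = 2)
    (hdecomp : ∃ A B : Finset (Fin n), Disjoint A B ∧ A ∪ B = T ∧ f A ≤ 1 ∧ f B ≤ 1) :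
    (∀ A B : Finset (Fin n), Disjoint A B → A ∪ B = T → f A ≤ 1 → f B ≤ 1 →
      Xor' (({f A, f B} : Set ℕ) = {0, 1}) (f A = 0 ∧ f B = 0)) ∧
    (∀ A B A' B' : Finset (Fin n),
      Disjoint A B → A ∪ B = T → f A ≤ 1 → f B ≤ 1 →
      Disjoint A' B' → A' ∪ B' = T → f A' ≤ 1 → f B' ≤ 1 →
      ((({f A, f B} : Set ℕ) = {0, 1}) ↔ (({f A', f B'} : Set ℕ) = {0, 1}))) := by
  obtain ⟨hbd, hpoly⟩ := hf
  -- f Tᶜ < 2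
  have hTc : f Tᶜ < 2 := by
    have hum := hpoly T Tᶜ ∅ disjoint_compl_right (Finset.disjoint_empty_right T)
      (Finset.disjoint_empty_right Tᶜ) (by simp)
    have h1 := hbd Tᶜ
    have h2 := hbd (∅ : Finset (Fin n))
    unfold HasUniqueMax at hum
    omega
  have key : ∀ A B : Finset (Fin n), Disjoint A B → A ∪ B = T → f A ≤ 1 → f B ≤ 1 →
      HasUniqueMax (f A) (f B) (f Tᶜ) := by
    intro A B hAB hU hA hB
    have hAsub : A ⊆ T := hU ▸ Finset.subset_union_left
    have hBsub : B ⊆ T := hU ▸ Finset.subset_union_right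
    exact hpoly A B Tᶜ hAB (disjoint_compl_right.mono_left hAsub)
      (disjoint_compl_right.mono_left hBsub) (by rw [hU]; simp)
  constructor
  · intro A B hAB hU hA hB
    have hum := key A B hAB hU hA hB
    rw [pair_eq_01 _ _ hA hB]
    unfold HasUniqueMax at hum
    unfold Xor' Xor
    omega
  · intro A B A' B' hAB hU hA hB hAB' hU' hA' hB'
    have hum := key A B hAB hU hA hB
    have hum' := key A' B' hAB' hU' hA' hB'
    rw [pair_eq_01 _ _ hA hB, pair_eq_01 _ _ hA' hB']
    unfold HasUniqueMax at hum hum'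
    omega
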